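/- Sinusoidal approximation remainder bound (equations (14)–(15)). Fix t ∈ ℝ. Let x ∈ 𝓑_{ε1,ε2} and let g be a window function, and let σ(t) > 0. Then for every η ∈ ℝ, the adaptive STFT satisfies Ṽ_x(t,η) = Σ_{k=0}^K x_k(t) ĝ(σ(t)(η − φ'_k(t))) + rem_0(t,η), where the remainder rem_0(t,η) := Σ_{k=0}^K ∫_ℝ [x_k(t+τ) − x_k(t)e^{2πi φ'_k(t)τ}] (1/σ(t)) g(τ/σ(t)) e^{−2πiητ} dτ satisfies |rem_0(t,η)| ≤ M(t)(ε1 I_1 σ(t) + π ε2 I_2 σ(t)²) = M(t)λ_0(t). -/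

import Mathlib

open MeasureTheory Real

noncomputable section

/-- The adaptive short-time Fourier transform with time-varying window width `σ`. -/
def aSTFT (x : ℝ → ℂ) (g : ℝ → ℝ) (σ : ℝ → ℝ) (t η : ℝ) : ℂ :=
  ∫ τ : ℝ, x (t + τ) * (((σ t)⁻¹ * g (τ / σ t) : ℝ) : ℂ) *
    Complex.exp (-(2 * (π : ℂ) * η * τ) * Complex.I)

/-- The Fourier transform `ĝ` of the window `g`. -/
def hatg (g : ℝ → ℝ) (ξ : ℝ) : ℂ :=
  ∫ τ : ℝ, (g τ : ℂ) * Complex.exp (-(2 * (π : ℂ) * ξ * τ) * Complex.I)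

/-- The absolute moments `I_n = ∫ |τ^n g(τ)| dτ` of the window. -/
def momentI (g : ℝ → ℝ) (n : ℕ) : ℝ := ∫ τ : ℝ, |τ| ^ n * |g τ|

/-- The `k`-th component `x_k(s) = A_k(s) e^{2πi φ_k(s)}`. -/
def xcomp (A φ : ℕ → ℝ → ℝ) (k : ℕ) (s : ℝ) : ℂ :=
  (A k s : ℂ) * Complex.exp ((2 * (π : ℂ) * φ k s) * Complex.I)

/-- `M(t) = Σ_{k=0}^K A_k(t)`. -/
def Msum (K : ℕ) (A : ℕ → ℝ → ℝ) (t : ℝ) : ℝ := ∑ k ∈ Finset.range (K + 1), A k t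

/-- `μ(t) = min_{0 ≤ k ≤ K} A_k(t)`. -/
def muMin (K : ℕ) (A : ℕ → ℝ → ℝ) (t : ℝ) : ℝ :=
  (Finset.range (K + 1)).inf' (by simp) fun k => A k t

/-- `λ_0(t) = ε1 I_1 σ(t) + π ε2 I_2 σ(t)²`. -/
def lam0 (g : ℝ → ℝ) (σ : ℝ → ℝ) (ε1 ε2 t : ℝ) : ℝ :=
  ε1 * momentI g 1 * σ t + π * ε2 * momentI g 2 * σ t ^ 2

/-- `err_ℓ(t) = M(t)λ_0(t) + Σ_{k≠ℓ} A_k(t) |ĝ(α(2|ℓ−k|−1))|`. -/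
def errl (K : ℕ) (A : ℕ → ℝ → ℝ) (g : ℝ → ℝ) (σ : ℝ → ℝ) (α ε1 ε2 : ℝ)
    (l : ℕ) (t : ℝ) : ℝ :=
  Msum K A t * lam0 g σ ε1 ε2 t +
    ∑ k ∈ (Finset.range (K + 1)).erase l,
      A k t * ‖hatg g (α * (2 * |(l : ℝ) - (k : ℝ)| - 1))‖

/-- `𝓖_t = {η : |Ṽ_x(t,η)| > ε̃1}`. -/
def Gt (x : ℝ → ℂ) (g : ℝ → ℝ) (σ : ℝ → ℝ) (t eps : ℝ) : Set ℝ :=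
  {η | eps < ‖aSTFT x g σ t η‖}

/-- `𝓖_{t,k} = {η ∈ 𝓖_t : |η − φ'_k(t)| < α/σ(t)}`. -/
def Gtk (x : ℝ → ℂ) (g : ℝ → ℝ) (σ : ℝ → ℝ) (φ : ℕ → ℝ → ℝ) (α t eps : ℝ)
    (k : ℕ) : Set ℝ :=
  {η | η ∈ Gt x g σ t eps ∧ |η - deriv (φ k) t| < α / σ t}


/-! ### Auxiliary lemmas -/

lemma expI_lip (a b : ℝ) :
    ‖Complex.exp ((a:ℂ) * Complex.I) - Complex.exp ((b:ℂ) * Complex.I)‖ ≤ |a - b| := by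
  have h : ∀ s : ℝ, HasDerivWithinAt (fun u : ℝ => Complex.exp ((u:ℂ) * Complex.I))
      (Complex.exp ((s:ℂ) * Complex.I) * Complex.I) Set.univ s := by
    intro s
    have h1 : HasDerivAt (fun u : ℝ => (u:ℂ) * Complex.I) Complex.I s := by
      simpa using (Complex.ofRealCLM.hasDerivAt (x := s)).mul_const Complex.I
    exact (h1.cexp).hasDerivWithinAt
  have := Convex.norm_image_sub_le_of_norm_hasDerivWithin_le (C := 1)
      (f' := fun s : ℝ => Complex.exp ((s:ℂ) * Complex.I) * Complex.I)
      (fun s _ => h s) (fun s _ => by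
        rw [norm_mul, Complex.norm_exp, Complex.norm_I]
        simp) convex_univ (Set.mem_univ b) (Set.mem_univ a)
  simpa [Real.norm_eq_abs] using this

lemma taylor_bound {φ : ℝ → ℝ} (hφ : ContDiff ℝ 2 φ) {ε2 : ℝ}
    (hb : ∀ s, |deriv (deriv φ) s| ≤ ε2) (t τ : ℝ) :
    |φ (t + τ) - φ t - deriv φ t * τ| ≤ ε2 * τ ^ 2 / 2 := by
  have hε2 : 0 ≤ ε2 := le_trans (abs_nonneg _) (hb 0)
  have h2 : ContDiff ℝ 1 (deriv φ) := by
    have := (contDiff_succ_iff_deriv (n := 1)).mp (by exact_mod_cast hφ)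
    exact this.2.2
  have hd1 : Differentiable ℝ φ := hφ.differentiable (by norm_num)
  have hd2 : Differentiable ℝ (deriv φ) := h2.differentiable (by norm_num)
  have hlip : ∀ s : ℝ, |deriv φ s - deriv φ t| ≤ ε2 * |s - t| := by
    intro s
    have := Convex.norm_image_sub_le_of_norm_hasDerivWithin_le (C := ε2)
        (f := deriv φ) (f' := fun u => deriv (deriv φ) u)
        (fun u _ => (hd2 u).hasDerivAt.hasDerivWithinAt)
        (fun u _ => by simpa [Real.norm_eq_abs] using hb u)
        convex_univ (Set.mem_univ t) (Set.mem_univ s)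
    simpa [Real.norm_eq_abs] using this
  have hftc : φ (t + τ) - φ t = ∫ s in t..(t + τ), deriv φ s := by
    rw [intervalIntegral.integral_deriv_eq_sub (fun s _ => hd1 s)
      (h2.continuous.intervalIntegrable _ _)]
  have hconst : deriv φ t * τ = ∫ s in t..(t + τ), deriv φ t := by
    simp [mul_comm]
  have key : φ (t + τ) - φ t - deriv φ t * τ
      = ∫ s in t..(t + τ), (deriv φ s - deriv φ t) := by
    rw [hftc, hconst, intervalIntegral.integral_sub
      (h2.continuous.intervalIntegrable _ _) intervalIntegrable_const]
  rw [key, ← Real.norm_eq_abs]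
  have hbnd := intervalIntegral.norm_integral_le_abs_of_norm_le
      (f := fun s => deriv φ s - deriv φ t) (g := fun s => ε2 * |s - t|)
      (μ := volume) (a := t) (b := t + τ)
      (Filter.Eventually.of_forall fun s => by
        simpa [Real.norm_eq_abs] using hlip s)
      (((continuous_const.mul ((continuous_id.sub continuous_const).abs)).intervalIntegrable _ _))
  refine hbnd.trans ?_
  have hcomp : (∫ s in t..(t + τ), ε2 * |s - t|) = ε2 * ∫ u in (0:ℝ)..τ, |u| := by
    rw [intervalIntegral.integral_const_mul]
    congr 1
    have := intervalIntegral.integral_comp_sub_right (a := t) (b := t + τ)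
      (fun u => |u|) t
    simpa using this
  rw [hcomp]
  have habs : |(∫ u in (0:ℝ)..τ, |u|)| = τ ^ 2 / 2 := by
    rcases le_or_gt 0 τ with h | h
    · have : (∫ u in (0:ℝ)..τ, |u|) = ∫ u in (0:ℝ)..τ, u := by
        apply intervalIntegral.integral_congr
        intro u hu
        rw [Set.uIcc_of_le h] at hu
        exact abs_of_nonneg hu.1
      rw [this, integral_id]
      rw [abs_of_nonneg (by nlinarith [sq_nonneg τ])]
      ring
    · have : (∫ u in (0:ℝ)..τ, |u|) = ∫ u in (0:ℝ)..τ, -u := by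
        apply intervalIntegral.integral_congr
        intro u hu
        rw [Set.uIcc_of_ge h.le] at hu
        exact abs_of_nonpos hu.2
      rw [this, intervalIntegral.integral_neg, integral_id]
      rw [abs_of_nonpos (by nlinarith [sq_nonneg τ])]
      ring
  rw [abs_mul, abs_of_nonneg hε2, habs]
  ring_nf
  exact le_rfl

lemma norm_exp_real_mul_I (r : ℝ) : ‖Complex.exp ((r:ℂ) * Complex.I)‖ = 1 := by
  rw [Complex.norm_exp]
  simp

lemma norm_amp_phase_sub {a b α β D1 D2 : ℝ} (hb : 0 ≤ b)
    (h1 : |a - b| ≤ D1) (h2 : |α - β| ≤ D2) :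
    ‖(a:ℂ) * Complex.exp ((α:ℂ) * Complex.I) - (b:ℂ) * Complex.exp ((β:ℂ) * Complex.I)‖
      ≤ D1 + b * D2 := by
  have key : (a:ℂ) * Complex.exp ((α:ℂ) * Complex.I) - (b:ℂ) * Complex.exp ((β:ℂ) * Complex.I)
      = ((a - b : ℝ):ℂ) * Complex.exp ((α:ℂ) * Complex.I)
        + (b:ℂ) * (Complex.exp ((α:ℂ) * Complex.I) - Complex.exp ((β:ℂ) * Complex.I)) := by
    push_cast; ring
  rw [key]
  refine (norm_add_le _ _).trans ?_
  rw [norm_mul, norm_mul, norm_exp_real_mul_I, mul_one, Complex.norm_real, Complex.norm_real]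
  rw [Real.norm_eq_abs, Real.norm_eq_abs, abs_of_nonneg hb]
  exact add_le_add h1 (mul_le_mul_of_nonneg_left ((expI_lip α β).trans h2) hb)

/-- Change of variables for the modulated window integral. -/
lemma cov_hatg (g : ℝ → ℝ) {c : ℝ} (hc : 0 < c) (ξ : ℝ) :
    (∫ τ : ℝ, ((c⁻¹ * g (τ / c) : ℝ) : ℂ) *
        Complex.exp (-(2 * (π : ℂ) * ξ * τ) * Complex.I)) = hatg g (c * ξ) := by
  have hc' : (c:ℂ) ≠ 0 := by exact_mod_cast hc.ne'
  have heq : ∀ τ : ℝ, ((c⁻¹ * g (τ / c) : ℝ) : ℂ) *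
      Complex.exp (-(2 * (π : ℂ) * ξ * τ) * Complex.I)
      = (c⁻¹ : ℂ) * ((fun u : ℝ => (g u : ℂ) *
          Complex.exp (-(2 * (π : ℂ) * (c * ξ) * u) * Complex.I)) (τ / c)) := by
    intro τ
    have harg : -(2 * (π : ℂ) * (c * ξ) * ((τ / c : ℝ) : ℂ)) = -(2 * (π : ℂ) * ξ * τ) := by
      push_cast
      field_simp
    simp only [harg]
    push_cast
    ring
  simp_rw [heq]
  rw [MeasureTheory.integral_const_mul, MeasureTheory.Measure.integral_comp_div
    (fun u : ℝ => (g u : ℂ) * Complex.exp (-(2 * (π : ℂ) * (c * ξ) * u) * Complex.I)) c]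
  rw [abs_of_pos hc, Complex.real_smul, ← mul_assoc, ← Complex.ofReal_mul,
    inv_mul_cancel₀ hc', one_mul]
  rfl

/-- Change of variables for real nonnegative weights. -/
lemma cov_real (F : ℝ → ℝ) {c : ℝ} (hc : 0 < c) :
    (∫ τ : ℝ, F (τ / c)) = c * ∫ u : ℝ, F u := by
  rw [MeasureTheory.Measure.integral_comp_div F c, abs_of_pos hc, smul_eq_mul]

theorem sinusoidal_remainder_bound (K : ℕ) (A φ : ℕ → ℝ → ℝ) (ε1 ε2 : ℝ) (x : ℝ → ℂ)
    (g : ℝ → ℝ) (σ : ℝ → ℝ) (t : ℝ)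
    (hε1 : 0 < ε1) (hε2 : 0 < ε2)
    (hAreg : ∀ k ≤ K, ContDiff ℝ 1 (A k))
    (hAbdd : ∀ k ≤ K, ∃ C, ∀ s, |A k s| ≤ C)
    (hφreg : ∀ k ≤ K, ContDiff ℝ 2 (φ k))
    (hφ0 : ∀ s, φ 0 s = 0)
    (hApos : ∀ k ≤ K, ∀ s, 0 < A k s)
    (hφ'pos : ∀ k, 1 ≤ k → k ≤ K → ∃ c > 0, ∀ s, c ≤ deriv (φ k) s)
    (hφ'bdd : ∀ k, 1 ≤ k → k ≤ K → ∃ C, ∀ s, deriv (φ k) s ≤ C)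
    (hfreq : ∃ d > 0, ∀ k, 2 ≤ k → k ≤ K → ∀ s, d ≤ deriv (φ k) s - deriv (φ (k - 1)) s)
    (hAlip : ∀ k ≤ K, ∀ s τ, |A k (s + τ) - A k s| ≤ ε1 * |τ| * A k s)
    (hφ'' : ∀ k, 1 ≤ k → k ≤ K → ∀ s, |deriv (deriv (φ k)) s| ≤ ε2)
    (hx : ∀ s, x s = ∑ k ∈ Finset.range (K + 1), xcomp A φ k s)
    (hgint : Integrable g)
    (hgL2 : MemLp g 2 (volume : Measure ℝ))
    (hgI1 : Integrable fun τ : ℝ => τ * g τ)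
    (hgI2 : Integrable fun τ : ℝ => τ ^ 2 * g τ)
    (hgnorm : (∫ τ : ℝ, g τ) = 1)
    (hσ : ∀ s, 0 < σ s)
    :
    ∀ η : ℝ,
      (aSTFT x g σ t η =
        (∑ k ∈ Finset.range (K + 1),
          xcomp A φ k t * hatg g (σ t * (η - deriv (φ k) t))) +
        (∑ k ∈ Finset.range (K + 1), ∫ τ : ℝ,
          (xcomp A φ k (t + τ) -
              xcomp A φ k t * Complex.exp (((2 * π * deriv (φ k) t * τ : ℝ) : ℂ) * Complex.I)) *
            (((σ t)⁻¹ * g (τ / σ t) : ℝ) : ℂ) *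
            Complex.exp (-(2 * (π : ℂ) * η * τ) * Complex.I))) ∧
      ‖∑ k ∈ Finset.range (K + 1), ∫ τ : ℝ,
          (xcomp A φ k (t + τ) -
              xcomp A φ k t * Complex.exp (((2 * π * deriv (φ k) t * τ : ℝ) : ℂ) * Complex.I)) *
            (((σ t)⁻¹ * g (τ / σ t) : ℝ) : ℂ) *
            Complex.exp (-(2 * (π : ℂ) * η * τ) * Complex.I)‖ ≤
        Msum K A t * lam0 g σ ε1 ε2 t := by
  intro η
  have hσt : 0 < σ t := hσ t
  have hKmem : ∀ k ∈ Finset.range (K + 1), k ≤ K :=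
    fun k hk => Nat.lt_succ_iff.mp (Finset.mem_range.mp hk)
  -- notation-level abbreviations (as plain functions)
  have hEnorm : ∀ τ : ℝ, ‖Complex.exp (-(2 * (π : ℂ) * η * τ) * Complex.I)‖ = 1 := by
    intro τ
    have harg : -(2 * (π : ℂ) * η * τ) = ((-(2 * π * η * τ) : ℝ) : ℂ) := by push_cast; ring
    rw [harg, norm_exp_real_mul_I]
  have hEc : Continuous fun τ : ℝ => Complex.exp (-(2 * (π : ℂ) * η * τ) * Complex.I) := by
    fun_prop
  have hnx : ∀ (k : ℕ) (s : ℝ), ‖xcomp A φ k s‖ = |A k s| := by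
    intro k s
    rw [xcomp, norm_mul]
    have harg : (2 * (π : ℂ) * (φ k s)) = ((2 * π * φ k s : ℝ) : ℂ) := by push_cast; ring
    rw [harg, norm_exp_real_mul_I, mul_one, Complex.norm_real, Real.norm_eq_abs]
  have hxc : ∀ k ≤ K, Continuous fun s => xcomp A φ k s := by
    intro k hk
    have hA := (hAreg k hk).continuous
    have hφc := (hφreg k hk).continuous
    unfold xcomp
    fun_prop
  have hWint : Integrable fun τ : ℝ => (σ t)⁻¹ * g (τ / σ t) :=
    (hgint.comp_div hσt.ne').const_mul _
  have hWc : Integrable fun τ : ℝ => (((σ t)⁻¹ * g (τ / σ t) : ℝ) : ℂ) := hWint.ofReal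
  have hWnorm : ∀ τ : ℝ, ‖(((σ t)⁻¹ * g (τ / σ t) : ℝ) : ℂ)‖ = (σ t)⁻¹ * |g (τ / σ t)| := by
    intro τ
    rw [Complex.norm_real, Real.norm_eq_abs, abs_mul, abs_of_pos (inv_pos.mpr hσt)]
  -- integrability of the main integrands
  have hfInt : ∀ k ≤ K, Integrable fun τ : ℝ =>
      xcomp A φ k (t + τ) * (((σ t)⁻¹ * g (τ / σ t) : ℝ) : ℂ) *
        Complex.exp (-(2 * (π : ℂ) * η * τ) * Complex.I) := by
    intro k hk
    obtain ⟨C, hC⟩ := hAbdd k hk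
    have hmain : Integrable fun τ : ℝ =>
        (xcomp A φ k (t + τ) * Complex.exp (-(2 * (π : ℂ) * η * τ) * Complex.I)) *
          (((σ t)⁻¹ * g (τ / σ t) : ℝ) : ℂ) := by
      refine hWc.bdd_mul (c := C) ?_ (Filter.Eventually.of_forall fun τ => ?_)
      · exact (((hxc k hk).comp (continuous_const.add continuous_id)).mul hEc).aestronglyMeasurable
      · rw [norm_mul, hEnorm, mul_one, hnx]; exact hC _
    have heq : (fun τ : ℝ =>
        (xcomp A φ k (t + τ) * Complex.exp (-(2 * (π : ℂ) * η * τ) * Complex.I)) *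
          (((σ t)⁻¹ * g (τ / σ t) : ℝ) : ℂ)) = fun τ : ℝ =>
        xcomp A φ k (t + τ) * (((σ t)⁻¹ * g (τ / σ t) : ℝ) : ℂ) *
          Complex.exp (-(2 * (π : ℂ) * η * τ) * Complex.I) := by
      funext τ; ring
    rw [heq] at hmain; exact hmain
  have hmInt : ∀ k ≤ K, Integrable fun τ : ℝ =>
      xcomp A φ k t * Complex.exp (((2 * π * deriv (φ k) t * τ : ℝ) : ℂ) * Complex.I) *
        (((σ t)⁻¹ * g (τ / σ t) : ℝ) : ℂ) *
        Complex.exp (-(2 * (π : ℂ) * η * τ) * Complex.I) := by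
    intro k hk
    have hmain : Integrable fun τ : ℝ =>
        (xcomp A φ k t * Complex.exp (((2 * π * deriv (φ k) t * τ : ℝ) : ℂ) * Complex.I) *
          Complex.exp (-(2 * (π : ℂ) * η * τ) * Complex.I)) *
          (((σ t)⁻¹ * g (τ / σ t) : ℝ) : ℂ) := by
      refine hWc.bdd_mul (c := |A k t|) ?_ (Filter.Eventually.of_forall fun τ => ?_)
      · have hc : Continuous fun τ : ℝ =>
            Complex.exp (((2 * π * deriv (φ k) t * τ : ℝ) : ℂ) * Complex.I) :=
          Complex.continuous_exp.comp
            ((Complex.continuous_ofReal.comp (continuous_const.mul continuous_id)).mul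
              continuous_const)
        exact ((continuous_const.mul hc).mul hEc).aestronglyMeasurable
      · rw [norm_mul, hEnorm, mul_one, norm_mul, hnx, norm_exp_real_mul_I, mul_one]
    have heq : (fun τ : ℝ =>
        (xcomp A φ k t * Complex.exp (((2 * π * deriv (φ k) t * τ : ℝ) : ℂ) * Complex.I) *
          Complex.exp (-(2 * (π : ℂ) * η * τ) * Complex.I)) *
          (((σ t)⁻¹ * g (τ / σ t) : ℝ) : ℂ)) = fun τ : ℝ =>
        xcomp A φ k t * Complex.exp (((2 * π * deriv (φ k) t * τ : ℝ) : ℂ) * Complex.I) *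
          (((σ t)⁻¹ * g (τ / σ t) : ℝ) : ℂ) *
          Complex.exp (-(2 * (π : ℂ) * η * τ) * Complex.I) := by
      funext τ; ring
    rw [heq] at hmain; exact hmain
  have hRInt : ∀ k ≤ K, Integrable fun τ : ℝ =>
      (xcomp A φ k (t + τ) -
          xcomp A φ k t * Complex.exp (((2 * π * deriv (φ k) t * τ : ℝ) : ℂ) * Complex.I)) *
        (((σ t)⁻¹ * g (τ / σ t) : ℝ) : ℂ) *
        Complex.exp (-(2 * (π : ℂ) * η * τ) * Complex.I) := by
    intro k hk
    have := (hfInt k hk).sub (hmInt k hk)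
    have heq : (fun τ : ℝ =>
        xcomp A φ k (t + τ) * (((σ t)⁻¹ * g (τ / σ t) : ℝ) : ℂ) *
          Complex.exp (-(2 * (π : ℂ) * η * τ) * Complex.I) -
        xcomp A φ k t * Complex.exp (((2 * π * deriv (φ k) t * τ : ℝ) : ℂ) * Complex.I) *
          (((σ t)⁻¹ * g (τ / σ t) : ℝ) : ℂ) *
          Complex.exp (-(2 * (π : ℂ) * η * τ) * Complex.I)) = fun τ : ℝ =>
        (xcomp A φ k (t + τ) -
            xcomp A φ k t * Complex.exp (((2 * π * deriv (φ k) t * τ : ℝ) : ℂ) * Complex.I)) *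
          (((σ t)⁻¹ * g (τ / σ t) : ℝ) : ℂ) *
          Complex.exp (-(2 * (π : ℂ) * η * τ) * Complex.I) := by
      funext τ; ring
    exact heq ▸ this
  -- the modulated integral computes to `hatg`
  have hm : ∀ k ≤ K, (∫ τ : ℝ,
      xcomp A φ k t * Complex.exp (((2 * π * deriv (φ k) t * τ : ℝ) : ℂ) * Complex.I) *
        (((σ t)⁻¹ * g (τ / σ t) : ℝ) : ℂ) *
        Complex.exp (-(2 * (π : ℂ) * η * τ) * Complex.I))
      = xcomp A φ k t * hatg g (σ t * (η - deriv (φ k) t)) := by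
    intro k hk
    have hpt : ∀ τ : ℝ,
        xcomp A φ k t * Complex.exp (((2 * π * deriv (φ k) t * τ : ℝ) : ℂ) * Complex.I) *
          (((σ t)⁻¹ * g (τ / σ t) : ℝ) : ℂ) *
          Complex.exp (-(2 * (π : ℂ) * η * τ) * Complex.I)
        = xcomp A φ k t * ((((σ t)⁻¹ * g (τ / σ t) : ℝ) : ℂ) *
            Complex.exp (-(2 * (π : ℂ) * ((η - deriv (φ k) t : ℝ) : ℂ) * τ) * Complex.I)) := by
      intro τ
      have hexp : Complex.exp (((2 * π * deriv (φ k) t * τ : ℝ) : ℂ) * Complex.I) *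
          Complex.exp (-(2 * (π : ℂ) * η * τ) * Complex.I)
          = Complex.exp (-(2 * (π : ℂ) * ((η - deriv (φ k) t : ℝ) : ℂ) * τ) * Complex.I) := by
        rw [← Complex.exp_add]
        congr 1
        push_cast
        ring
      calc xcomp A φ k t * Complex.exp (((2 * π * deriv (φ k) t * τ : ℝ) : ℂ) * Complex.I) *
            (((σ t)⁻¹ * g (τ / σ t) : ℝ) : ℂ) *
            Complex.exp (-(2 * (π : ℂ) * η * τ) * Complex.I)
          = xcomp A φ k t * ((((σ t)⁻¹ * g (τ / σ t) : ℝ) : ℂ) *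
              (Complex.exp (((2 * π * deriv (φ k) t * τ : ℝ) : ℂ) * Complex.I) *
                Complex.exp (-(2 * (π : ℂ) * η * τ) * Complex.I))) := by ring
        _ = _ := by rw [hexp]
    simp_rw [hpt]
    rw [MeasureTheory.integral_const_mul, cov_hatg g hσt (η - deriv (φ k) t)]
  -- splitting of each component integral
  have hsplit : ∀ k ≤ K, (∫ τ : ℝ,
      xcomp A φ k (t + τ) * (((σ t)⁻¹ * g (τ / σ t) : ℝ) : ℂ) *
        Complex.exp (-(2 * (π : ℂ) * η * τ) * Complex.I))
      = xcomp A φ k t * hatg g (σ t * (η - deriv (φ k) t)) +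
        ∫ τ : ℝ,
          (xcomp A φ k (t + τ) -
              xcomp A φ k t * Complex.exp (((2 * π * deriv (φ k) t * τ : ℝ) : ℂ) * Complex.I)) *
            (((σ t)⁻¹ * g (τ / σ t) : ℝ) : ℂ) *
            Complex.exp (-(2 * (π : ℂ) * η * τ) * Complex.I) := by
    intro k hk
    have heq : (fun τ : ℝ =>
        xcomp A φ k (t + τ) * (((σ t)⁻¹ * g (τ / σ t) : ℝ) : ℂ) *
          Complex.exp (-(2 * (π : ℂ) * η * τ) * Complex.I)) = fun τ : ℝ =>
        (xcomp A φ k (t + τ) -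
            xcomp A φ k t * Complex.exp (((2 * π * deriv (φ k) t * τ : ℝ) : ℂ) * Complex.I)) *
          (((σ t)⁻¹ * g (τ / σ t) : ℝ) : ℂ) *
          Complex.exp (-(2 * (π : ℂ) * η * τ) * Complex.I) +
        xcomp A φ k t * Complex.exp (((2 * π * deriv (φ k) t * τ : ℝ) : ℂ) * Complex.I) *
          (((σ t)⁻¹ * g (τ / σ t) : ℝ) : ℂ) *
          Complex.exp (-(2 * (π : ℂ) * η * τ) * Complex.I) := by
      funext τ; ring
    rw [heq, MeasureTheory.integral_add (hRInt k hk) (hmInt k hk), hm k hk, add_comm]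
  -- the decomposition identity
  have hid : aSTFT x g σ t η = ∑ k ∈ Finset.range (K + 1), ∫ τ : ℝ,
      xcomp A φ k (t + τ) * (((σ t)⁻¹ * g (τ / σ t) : ℝ) : ℂ) *
        Complex.exp (-(2 * (π : ℂ) * η * τ) * Complex.I) := by
    rw [aSTFT]
    rw [show (fun τ : ℝ => x (t + τ) * (((σ t)⁻¹ * g (τ / σ t) : ℝ) : ℂ) *
        Complex.exp (-(2 * (π : ℂ) * η * τ) * Complex.I)) = fun τ : ℝ =>
        ∑ k ∈ Finset.range (K + 1),
          xcomp A φ k (t + τ) * (((σ t)⁻¹ * g (τ / σ t) : ℝ) : ℂ) *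
            Complex.exp (-(2 * (π : ℂ) * η * τ) * Complex.I) from
      funext fun τ => by rw [hx (t + τ), Finset.sum_mul, Finset.sum_mul]]
    exact MeasureTheory.integral_finset_sum _ fun k hk => hfInt k (hKmem k hk)
  -- Taylor bound for each phase
  have htay : ∀ k ≤ K, ∀ τ : ℝ,
      |φ k (t + τ) - φ k t - deriv (φ k) t * τ| ≤ ε2 * τ ^ 2 / 2 := by
    intro k hk τ
    rcases Nat.eq_zero_or_pos k with rfl | hk1
    · have h0 : φ 0 = fun _ => (0 : ℝ) := funext hφ0
      rw [h0]
      simp only [deriv_const']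
      simp only [sub_zero, zero_mul, sub_self, abs_zero]
      positivity
    · exact taylor_bound (hφreg k hk) (hφ'' k hk1 hk) t τ
  -- pointwise norm bound on the remainder integrand
  have hpw : ∀ k ≤ K, ∀ τ : ℝ,
      ‖(xcomp A φ k (t + τ) -
          xcomp A φ k t * Complex.exp (((2 * π * deriv (φ k) t * τ : ℝ) : ℂ) * Complex.I)) *
        (((σ t)⁻¹ * g (τ / σ t) : ℝ) : ℂ) *
        Complex.exp (-(2 * (π : ℂ) * η * τ) * Complex.I)‖
      ≤ A k t * (ε1 * |τ| + π * ε2 * τ ^ 2) * ((σ t)⁻¹ * |g (τ / σ t)|) := by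
    intro k hk τ
    rw [norm_mul, norm_mul, hEnorm, mul_one, hWnorm]
    refine mul_le_mul_of_nonneg_right ?_ (by positivity)
    -- rewrite the difference in amplitude/phase form
    have h1 : xcomp A φ k (t + τ)
        = ((A k (t + τ) : ℝ) : ℂ) * Complex.exp (((2 * π * φ k (t + τ) : ℝ) : ℂ) * Complex.I) := by
      rw [xcomp]; norm_cast
    have h2 : xcomp A φ k t * Complex.exp (((2 * π * deriv (φ k) t * τ : ℝ) : ℂ) * Complex.I)
        = ((A k t : ℝ) : ℂ) *
            Complex.exp (((2 * π * φ k t + 2 * π * deriv (φ k) t * τ : ℝ) : ℂ) * Complex.I) := by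
      rw [xcomp, mul_assoc, ← Complex.exp_add]
      congr 2
      push_cast
      ring
    rw [h1, h2]
    have hb0 : 0 ≤ A k t := (hApos k hk t).le
    have hest := norm_amp_phase_sub (a := A k (t + τ)) (b := A k t)
      (α := 2 * π * φ k (t + τ)) (β := 2 * π * φ k t + 2 * π * deriv (φ k) t * τ)
      (D1 := ε1 * |τ| * A k t) (D2 := 2 * π * (ε2 * τ ^ 2 / 2)) hb0
      (hAlip k hk t τ)
      (by
        have : 2 * π * φ k (t + τ) - (2 * π * φ k t + 2 * π * deriv (φ k) t * τ)
            = 2 * π * (φ k (t + τ) - φ k t - deriv (φ k) t * τ) := by ring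
        rw [this, abs_mul, abs_of_pos (by positivity : (0:ℝ) < 2 * π)]
        exact mul_le_mul_of_nonneg_left (htay k hk τ) (by positivity))
    calc _ ≤ ε1 * |τ| * A k t + A k t * (2 * π * (ε2 * τ ^ 2 / 2)) := hest
      _ = A k t * (ε1 * |τ| + π * ε2 * τ ^ 2) := by ring
  -- integral of the dominating function
  have hF1 : Integrable fun u : ℝ => |u| * |g u| := by
    have := hgI1.abs
    simpa [abs_mul] using this
  have hF2 : Integrable fun u : ℝ => |u| ^ 2 * |g u| := by
    have := hgI2.abs
    simpa [abs_mul, abs_pow] using this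
  have hF1div : ∀ τ : ℝ, |τ / σ t| * |g (τ / σ t)| = |τ| * ((σ t)⁻¹ * |g (τ / σ t)|) := by
    intro τ
    rw [abs_div, abs_of_pos hσt, div_eq_mul_inv]
    ring
  have hF2div : ∀ τ : ℝ, σ t * (|τ / σ t| ^ 2 * |g (τ / σ t)|)
      = τ ^ 2 * ((σ t)⁻¹ * |g (τ / σ t)|) := by
    intro τ
    rw [abs_div, abs_of_pos hσt, div_pow, sq_abs]
    field_simp
  have hGbound : ∀ k ≤ K, (∫ τ : ℝ,
      A k t * (ε1 * |τ| + π * ε2 * τ ^ 2) * ((σ t)⁻¹ * |g (τ / σ t)|))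
      = A k t * lam0 g σ ε1 ε2 t ∧
      Integrable fun τ : ℝ =>
        A k t * (ε1 * |τ| + π * ε2 * τ ^ 2) * ((σ t)⁻¹ * |g (τ / σ t)|) := by
    intro k hk
    have hGeq : (fun τ : ℝ => A k t * (ε1 * |τ| + π * ε2 * τ ^ 2) * ((σ t)⁻¹ * |g (τ / σ t)|))
        = fun τ : ℝ => A k t * ε1 * ((fun u => |u| * |g u|) (τ / σ t)) +
            A k t * (π * ε2) * σ t * ((fun u => |u| ^ 2 * |g u|) (τ / σ t)) := by
      funext τ
      simp only
      linear_combination (-(A k t * ε1)) * hF1div τ - A k t * (π * ε2) * hF2div τ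
    have hi1 : Integrable fun τ : ℝ => A k t * ε1 * ((fun u => |u| * |g u|) (τ / σ t)) :=
      (hF1.comp_div hσt.ne').const_mul _
    have hi2 : Integrable fun τ : ℝ =>
        A k t * (π * ε2) * σ t * ((fun u => |u| ^ 2 * |g u|) (τ / σ t)) :=
      (hF2.comp_div hσt.ne').const_mul _
    constructor
    · have c1 : (∫ τ : ℝ, |τ / σ t| * |g (τ / σ t)|) = σ t * ∫ u : ℝ, |u| * |g u| :=
        cov_real (fun u => |u| * |g u|) hσt
      have c2 : (∫ τ : ℝ, |τ / σ t| ^ 2 * |g (τ / σ t)|) = σ t * ∫ u : ℝ, |u| ^ 2 * |g u| :=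
        cov_real (fun u => |u| ^ 2 * |g u|) hσt
      rw [hGeq, MeasureTheory.integral_add hi1 hi2, MeasureTheory.integral_const_mul,
        MeasureTheory.integral_const_mul]
      simp only
      rw [c1, c2]
      have e1 : (∫ u : ℝ, |u| * |g u|) = momentI g 1 := by
        rw [momentI]; simp [pow_one]
      have e2 : (∫ u : ℝ, |u| ^ 2 * |g u|) = momentI g 2 := rfl
      rw [e1, e2, lam0]
      ring
    · rw [hGeq]; exact hi1.add hi2
  -- norm bound for each remainder integral
  have hbnd : ∀ k ≤ K, ‖∫ τ : ℝ,
      (xcomp A φ k (t + τ) -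
          xcomp A φ k t * Complex.exp (((2 * π * deriv (φ k) t * τ : ℝ) : ℂ) * Complex.I)) *
        (((σ t)⁻¹ * g (τ / σ t) : ℝ) : ℂ) *
        Complex.exp (-(2 * (π : ℂ) * η * τ) * Complex.I)‖
      ≤ A k t * lam0 g σ ε1 ε2 t := by
    intro k hk
    obtain ⟨hval, hint⟩ := hGbound k hk
    calc _ ≤ ∫ τ : ℝ, A k t * (ε1 * |τ| + π * ε2 * τ ^ 2) * ((σ t)⁻¹ * |g (τ / σ t)|) :=
          MeasureTheory.norm_integral_le_of_norm_le hint
            (Filter.Eventually.of_forall (hpw k hk))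
      _ = A k t * lam0 g σ ε1 ε2 t := hval
  refine ⟨?_, ?_⟩
  · rw [hid, ← Finset.sum_add_distrib]
    exact Finset.sum_congr rfl fun k hk => hsplit k (hKmem k hk)
  · calc ‖∑ k ∈ Finset.range (K + 1), ∫ τ : ℝ,
        (xcomp A φ k (t + τ) -
            xcomp A φ k t * Complex.exp (((2 * π * deriv (φ k) t * τ : ℝ) : ℂ) * Complex.I)) *
          (((σ t)⁻¹ * g (τ / σ t) : ℝ) : ℂ) *
          Complex.exp (-(2 * (π : ℂ) * η * τ) * Complex.I)‖
        ≤ ∑ k ∈ Finset.range (K + 1), ‖∫ τ : ℝ,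
          (xcomp A φ k (t + τ) -
              xcomp A φ k t * Complex.exp (((2 * π * deriv (φ k) t * τ : ℝ) : ℂ) * Complex.I)) *
            (((σ t)⁻¹ * g (τ / σ t) : ℝ) : ℂ) *
            Complex.exp (-(2 * (π : ℂ) * η * τ) * Complex.I)‖ := norm_sum_le _ _
      _ ≤ ∑ k ∈ Finset.range (K + 1), A k t * lam0 g σ ε1 ε2 t :=
          Finset.sum_le_sum fun k hk => hbnd k (hKmem k hk)
      _ = Msum K A t * lam0 g σ ε1 ε2 t := by rw [Msum, ← Finset.sum_mul]
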